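/- For a p×q transportation polytope P with integer marginals and any fixed cell (i,j), the set of values {x_{i,j} : x an integer point of P} is an interval of integers: if a and b are achieved values with a ≤ c ≤ b and c ∈ ℤ, then c is achieved. -/

import Mathlib

open Finset

/-- The integer points of the `p × q` transportation polytope with integer marginals. -/
def intTransportationTables (p q : ℕ) (u : Fin p → ℤ) (v : Fin q → ℤ) :
    Set (Matrix (Fin p) (Fin q) ℤ) :=
  {x | (∀ i j, 0 ≤ x i j) ∧ (∀ i, ∑ j, x i j = u i) ∧ (∀ j, ∑ i, x i j = v j)}

/-- A 4-cycle perturbation matrix. -/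
def cycMat {p q : ℕ} (i i' : Fin p) (j j' : Fin q) : Matrix (Fin p) (Fin q) ℤ :=
  fun k l =>
    if k = i then (if l = j then 1 else if l = j' then -1 else 0)
    else if k = i' then (if l = j then -1 else if l = j' then 1 else 0)
    else 0

lemma sum_two_aux {n : ℕ} (j j' : Fin n) (h : j ≠ j') (a b : ℤ) :
    ∑ l, (if l = j then a else if l = j' then b else 0) = a + b := by
  have hfun : ∀ l : Fin n, (if l = j then a else if l = j' then b else 0)
      = (if l = j then a else 0) + (if l = j' then b else 0) := by
    intro l
    by_cases h1 : l = j <;> by_cases h2 : l = j' <;> simp_all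
  rw [Finset.sum_congr rfl (fun l _ => hfun l), Finset.sum_add_distrib]
  simp [Finset.sum_ite_eq']

lemma cycMat_row {p q : ℕ} (i i' : Fin p) (j j' : Fin q) (hjj : j ≠ j') (k : Fin p) :
    ∑ l, cycMat i i' j j' k l = 0 := by
  unfold cycMat
  by_cases hk : k = i
  · simp only [hk, if_true, eq_self_iff_true]
    rw [sum_two_aux j j' hjj 1 (-1)]; ring
  · by_cases hk' : k = i'
    · have hne : i' ≠ i := fun h => hk (by rw [hk', h])
      simp only [hk', if_neg hne, eq_self_iff_true, if_true]
      rw [sum_two_aux j j' hjj (-1) 1]; ring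
    · simp [hk, hk']

lemma cycMat_col {p q : ℕ} (i i' : Fin p) (j j' : Fin q) (hii : i ≠ i') (l : Fin q) :
    ∑ k, cycMat i i' j j' k l = 0 := by
  have hfun : ∀ k : Fin p, cycMat i i' j j' k l =
      (if k = i then (if l = j then 1 else if l = j' then -1 else 0) else 0)
      + (if k = i' then (if l = j then -1 else if l = j' then 1 else 0) else 0) := by
    intro k
    unfold cycMat
    by_cases h1 : k = i <;> by_cases h2 : k = i' <;> simp_all
  rw [Finset.sum_congr rfl (fun k _ => hfun k), Finset.sum_add_distrib]
  simp only [Finset.sum_ite_eq', Finset.mem_univ, if_pos]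
  split_ifs <;> ring

lemma key_step (p q : ℕ) (u : Fin p → ℤ) (v : Fin q → ℤ) (i : Fin p) (j : Fin q) :
    ∀ g : ℕ, ∀ x y : Matrix (Fin p) (Fin q) ℤ, x ∈ intTransportationTables p q u v →
      y ∈ intTransportationTables p q u v → x i j < y i j → (y i j - x i j).toNat ≤ g →
      ∃ z ∈ intTransportationTables p q u v, z i j = x i j + 1 := by
  intro g
  induction g with
  | zero => intro x y hx hy hlt hle; omega
  | succ g ih =>
    intro x y hx hy hlt hle
    by_cases hone : y i j = x i j + 1
    · exact ⟨y, hy, hone⟩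
    obtain ⟨hx0, hxr, hxc⟩ := hx
    obtain ⟨hy0, hyr, hyc⟩ := hy
    have hcol : ∑ k, (y k j - x k j) = 0 := by
      rw [Finset.sum_sub_distrib, hyc j, hxc j]; ring
    have hi'ex : ∃ i', y i' j < x i' j := by
      by_contra h
      push_neg at h
      have hpos : 0 < ∑ k, (y k j - x k j) :=
        Finset.sum_pos' (fun k _ => by have := h k; omega)
          ⟨i, Finset.mem_univ i, by omega⟩
      omega
    obtain ⟨i', hi'⟩ := hi'ex
    have hrow : ∑ l, (x i' l - y i' l) = 0 := by
      rw [Finset.sum_sub_distrib, hxr i', hyr i']; ring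
    have hj'ex : ∃ j', x i' j' < y i' j' := by
      by_contra h
      push_neg at h
      have hpos : 0 < ∑ l, (x i' l - y i' l) :=
        Finset.sum_pos' (fun l _ => by have := h l; omega)
          ⟨j, Finset.mem_univ j, by omega⟩
      omega
    obtain ⟨j', hj'⟩ := hj'ex
    have hii : i ≠ i' := by intro h; rw [h] at hlt; omega
    have hjj : j ≠ j' := by intro h; rw [← h] at hj'; omega
    have hznn : ∀ k l, 0 ≤ y k l - cycMat i i' j j' k l := by
      intro k l
      have A := hy0 k l
      have B := hx0 i' j'
      have C := hx0 i j
      unfold cycMat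
      split_ifs with h1 h2 h3 h4 h5 h6 <;> subst_vars <;> omega
    have hzr : ∀ k, ∑ l, (y k l - cycMat i i' j j' k l) = u k := by
      intro k
      rw [Finset.sum_sub_distrib, hyr k, cycMat_row i i' j j' hjj k]; ring
    have hzc : ∀ l, ∑ k, (y k l - cycMat i i' j j' k l) = v l := by
      intro l
      rw [Finset.sum_sub_distrib, hyc l, cycMat_col i i' j j' hii l]; ring
    have hzij : (fun k l => y k l - cycMat i i' j j' k l) i j = y i j - 1 := by
      simp [cycMat]
    exact ih x (fun k l => y k l - cycMat i i' j j' k l) ⟨hx0, hxr, hxc⟩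
      ⟨hznn, hzr, hzc⟩ (by have h := hzij; beta_reduce at h; omega) (by have h := hzij; beta_reduce at h; omega)

/-- Integer range of a coordinate: the set of values of a fixed entry over all integer
points of a transportation polytope is an interval of integers. -/
theorem intTransportationTables_entry_interval (p q : ℕ) (u : Fin p → ℤ) (v : Fin q → ℤ)
    (hsum : ∑ i, u i = ∑ j, v j) (i : Fin p) (j : Fin q) (a b c : ℤ)
    (ha : ∃ x ∈ intTransportationTables p q u v, x i j = a)
    (hb : ∃ x ∈ intTransportationTables p q u v, x i j = b)
    (hac : a ≤ c) (hcb : c ≤ b) :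
    ∃ x ∈ intTransportationTables p q u v, x i j = c := by
  obtain ⟨y, hy, hyb⟩ := hb
  have main : ∀ n : ℕ, ∀ a' : ℤ, a' ≤ c → (c - a').toNat ≤ n →
      (∃ x ∈ intTransportationTables p q u v, x i j = a') →
      ∃ x ∈ intTransportationTables p q u v, x i j = c := by
    intro n
    induction n with
    | zero =>
      intro a' h1 h2 hx
      have : a' = c := by omega
      subst this; exact hx
    | succ n ih =>
      intro a' h1 h2 ⟨x, hx, hxa⟩
      by_cases heq : a' = c
      · subst heq; exact ⟨x, hx, hxa⟩
      · have hlt : x i j < y i j := by omega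
        obtain ⟨z, hz, hzval⟩ := key_step p q u v i j
          ((y i j - x i j).toNat) x y hx hy hlt le_rfl
        exact ih (a' + 1) (by omega) (by omega) ⟨z, hz, by omega⟩
  exact main (c - a).toNat a hac le_rfl ha
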